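/- Let p ≥ 1, n ≥ 1, and let N be a monotone norm on ℝⁿ that is twice differentiable at every point of the nonnegative orthant except the origin. Then the following are equivalent: (i) N is p-supermodular; (ii) ∂²_{ij}(N^p)(u) ≥ 0 for all u ∈ ℝⁿ₊ with u ≠ 0 and all coordinates i, j; (iii) ∂²_{ij}N(u) ≥ −(p−1)·∂_iN(u)·∂_jN(u)/N(u) for all u ∈ ℝⁿ₊ with u ≠ 0 and all coordinates i, j. -/

import Mathlib

noncomputable section

/-- A monotone norm on ℝⁿ: subadditive, absolutely homogeneous, point-separating, and
monotone on the nonnegative orthant. -/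
def IsMonotoneNorm {n : ℕ} (N : (Fin n → ℝ) → ℝ) : Prop :=
  (∀ x y, N (x + y) ≤ N x + N y) ∧
  (∀ (c : ℝ) (x), N (c • x) = |c| * N x) ∧
  (∀ x, N x = 0 → x = 0) ∧
  (∀ x y : Fin n → ℝ, 0 ≤ x → x ≤ y → N x ≤ N y)

/-- `N` is `p`-supermodular: `N(u+v+w)^p − N(u+v)^p ≥ N(u+w)^p − N(u)^p` for all
nonnegative `u, v, w`. -/
def IsPSupermodular {n : ℕ} (N : (Fin n → ℝ) → ℝ) (p : ℝ) : Prop :=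
  ∀ u v w : Fin n → ℝ, 0 ≤ u → 0 ≤ v → 0 ≤ w →
    N (u + w) ^ p - N u ^ p ≤ N (u + v + w) ^ p - N (u + v) ^ p

/-- Partial derivative `∂ᵢ F` at `x`. -/
def pderiv {n : ℕ} (F : (Fin n → ℝ) → ℝ) (i : Fin n) (x : Fin n → ℝ) : ℝ :=
  fderiv ℝ F x (Pi.single i 1)

/-- Second partial derivative `∂²ᵢⱼ F` at `x`. -/
def pderiv2 {n : ℕ} (F : (Fin n → ℝ) → ℝ) (i j : Fin n) (x : Fin n → ℝ) : ℝ :=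
  fderiv ℝ (fun y => fderiv ℝ F y (Pi.single j 1)) x (Pi.single i 1)

namespace PSupAux

open Topology Filter

variable {n : ℕ} {N : (Fin n → ℝ) → ℝ}

lemma mn_zero (hN : IsMonotoneNorm N) : N 0 = 0 := by
  simpa using hN.2.1 0 0

lemma mn_neg (hN : IsMonotoneNorm N) (x : Fin n → ℝ) : N (-x) = N x := by
  simpa using hN.2.1 (-1) x

lemma mn_nonneg (hN : IsMonotoneNorm N) (x : Fin n → ℝ) : 0 ≤ N x := by
  have h1 := hN.1 x (-x)
  rw [add_neg_cancel, mn_zero hN, mn_neg hN] at h1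
  linarith

lemma mn_pos (hN : IsMonotoneNorm N) {x : Fin n → ℝ} (hx : x ≠ 0) : 0 < N x :=
  lt_of_le_of_ne (mn_nonneg hN x) (fun h => hx (hN.2.2.1 x h.symm))

lemma smul_single_one (i : Fin n) (c : ℝ) : c • (Pi.single i 1 : Fin n → ℝ) = Pi.single i c := by
  funext j
  by_cases h : j = i <;> simp [Pi.single_apply, h]

lemma single_decomp (v : Fin n → ℝ) : v = ∑ i, v i • (Pi.single i 1 : Fin n → ℝ) := by
  conv_lhs => rw [← Finset.univ_sum_single v]
  exact Finset.sum_congr rfl fun i _ => (smul_single_one i (v i)).symm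

lemma mn_le_sum (hN : IsMonotoneNorm N) (x : Fin n → ℝ) :
    N x ≤ ∑ i, |x i| * N (Pi.single i 1) := by
  have key : ∀ s : Finset (Fin n),
      N (∑ i ∈ s, Pi.single i (x i)) ≤ ∑ i ∈ s, |x i| * N (Pi.single i 1) := by
    intro s
    induction s using Finset.induction with
    | empty => simp [mn_zero hN]
    | @insert a s ha ih =>
      rw [Finset.sum_insert ha, Finset.sum_insert ha]
      refine le_trans (hN.1 _ _) (add_le_add (le_of_eq ?_) ih)
      rw [← smul_single_one, hN.2.1]
  simpa [Finset.univ_sum_single] using key Finset.univ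

lemma mn_continuous (hN : IsMonotoneNorm N) : Continuous N := by
  set C : ℝ := ∑ i, N (Pi.single i 1) with hC
  have hC0 : 0 ≤ C := Finset.sum_nonneg fun i _ => mn_nonneg hN _
  have key : ∀ x y : Fin n → ℝ, N x - N y ≤ C * dist x y := by
    intro x y
    have h1 : N x ≤ N y + N (x - y) := by
      have := hN.1 y (x - y); simpa using this
    have h2 := mn_le_sum hN (x - y)
    have h3 : ∑ i, |(x - y) i| * N (Pi.single i 1) ≤ ∑ i, dist x y * N (Pi.single i 1) := by
      refine Finset.sum_le_sum fun i _ => ?_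
      refine mul_le_mul_of_nonneg_right ?_ (mn_nonneg hN _)
      have : |(x - y) i| = dist (x i) (y i) := by
        rw [Real.dist_eq]; simp
      rw [this]
      exact dist_le_pi_dist x y i
    rw [← Finset.mul_sum] at h3
    nlinarith [mul_comm (dist x y) C]
  refine LipschitzWith.continuous (K := ⟨C, hC0⟩) ?_
  refine lipschitzWith_iff_dist_le_mul.2 ?_
  intro x y
  rw [Real.dist_eq, abs_sub_le_iff]
  refine ⟨?_, ?_⟩
  · exact (by simpa using key x y : N x - N y ≤ C * dist x y)
  · exact (by simpa [dist_comm] using key y x : N y - N x ≤ C * dist x y)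


lemma pderiv2_def {F : (Fin n → ℝ) → ℝ} (i j : Fin n) (x : Fin n → ℝ) :
    pderiv2 F i j x = fderiv ℝ (fun y => fderiv ℝ F y (Pi.single j 1)) x (Pi.single i 1) := rfl

lemma single_nonneg' (i : Fin n) : (0 : Fin n → ℝ) ≤ Pi.single i 1 := by
  intro j
  by_cases h : j = i <;> simp [Pi.single_apply, h]

lemma add_ne_zero_left {a b : Fin n → ℝ} (ha : 0 ≤ a) (ha0 : a ≠ 0) (hb : 0 ≤ b) :
    a + b ≠ 0 := fun h =>
  ha0 (le_antisymm (h ▸ le_add_of_nonneg_right hb) ha)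

lemma line_hasDerivAt (x v : Fin n → ℝ) (t : ℝ) :
    HasDerivAt (fun s : ℝ => x + s • v) v t := by
  simpa using ((hasDerivAt_id t).smul_const v).const_add x

lemma hasDerivAt_comp_line {f : (Fin n → ℝ) → ℝ} {y : Fin n → ℝ}
    (h : DifferentiableAt ℝ f y) {ℓ : ℝ → (Fin n → ℝ)} {v : Fin n → ℝ} {t : ℝ}
    (hℓ : HasDerivAt ℓ v t) (hy : ℓ t = y) :
    HasDerivAt (fun s => f (ℓ s)) (fderiv ℝ f y v) t := by
  simpa [Function.comp_def] using h.hasFDerivAt.comp_hasDerivAt_of_eq t hℓ hy.symm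

lemma tendsto_slope_dir {f : (Fin n → ℝ) → ℝ} {x : Fin n → ℝ}
    (hf : DifferentiableAt ℝ f x) (v : Fin n → ℝ) :
    Filter.Tendsto (fun s : ℝ => (f (x + s • v) - f x) / s) (𝓝[>] (0:ℝ))
      (nhds (fderiv ℝ f x v)) := by
  have h1 : HasDerivAt (fun s : ℝ => f (x + s • v)) (fderiv ℝ f x v) 0 :=
    hasDerivAt_comp_line hf (line_hasDerivAt x v 0) (by simp)
  rw [hasDerivAt_iff_tendsto_slope] at h1
  have h2 := h1.mono_left (nhdsWithin_mono _ (fun s hs => ne_of_gt hs))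
  have heq : (fun s : ℝ => (f (x + s • v) - f x) / s)
      = slope (fun s : ℝ => f (x + s • v)) 0 := by
    funext s
    rw [slope_def_field]
    simp
  rw [heq]
  exact h2

/-- from discrete supermodularity, directional derivatives are monotone. -/
lemma fderiv_mono_of_supermod {F : (Fin n → ℝ) → ℝ}
    (hd : ∀ x : Fin n → ℝ, 0 ≤ x → x ≠ 0 → DifferentiableAt ℝ F x)
    (hsup : ∀ u v w : Fin n → ℝ, 0 ≤ u → 0 ≤ v → 0 ≤ w →
      F (u + w) - F u ≤ F (u + v + w) - F (u + v))
    {a b v : Fin n → ℝ} (ha : 0 ≤ a) (ha0 : a ≠ 0) (hb : 0 ≤ b) (hv : 0 ≤ v) :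
    fderiv ℝ F a v ≤ fderiv ℝ F (a + b) v := by
  have hab : 0 ≤ a + b := add_nonneg ha hb
  have hab0 : a + b ≠ 0 := add_ne_zero_left ha ha0 hb
  have T1 := tendsto_slope_dir (hd a ha ha0) v
  have T2 := tendsto_slope_dir (hd _ hab hab0) v
  refine le_of_tendsto_of_tendsto T1 T2 ?_
  filter_upwards [self_mem_nhdsWithin] with s hs
  have hs' : (0:ℝ) < s := hs
  have key := hsup a b (s • v) ha hb (smul_nonneg hs'.le hv)
  have : F (a + s • v) - F a ≤ F (a + b + s • v) - F (a + b) := key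
  gcongr

/-- supermodularity implies the mixed second partials of `F` are nonnegative. -/
lemma hess_nonneg_of_supermod {F : (Fin n → ℝ) → ℝ}
    (hdiffF : ∀ x : Fin n → ℝ, 0 ≤ x → x ≠ 0 → ContDiffAt ℝ 2 F x)
    (hsup : ∀ u v w : Fin n → ℝ, 0 ≤ u → 0 ≤ v → 0 ≤ w →
      F (u + w) - F u ≤ F (u + v + w) - F (u + v))
    {u : Fin n → ℝ} (hu : 0 ≤ u) (hu0 : u ≠ 0) (i j : Fin n) :
    0 ≤ pderiv2 F i j u := by
  have hd : ∀ x : Fin n → ℝ, 0 ≤ x → x ≠ 0 → DifferentiableAt ℝ F x :=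
    fun x hx hx0 => (hdiffF x hx hx0).differentiableAt (by norm_num)
  have hG : DifferentiableAt ℝ (fun y => fderiv ℝ F y (Pi.single j 1)) u :=
    (((hdiffF u hu hu0).fderiv_right (m := 1) (by norm_num)).differentiableAt
      (by norm_num)).clm_apply (differentiableAt_const _)
  have hh : HasDerivAt (fun t : ℝ => fderiv ℝ F (u + t • (Pi.single i 1 : Fin n → ℝ)) (Pi.single j 1))
      (pderiv2 F i j u) 0 := by
    have := hasDerivAt_comp_line hG (line_hasDerivAt u (Pi.single i 1 : Fin n → ℝ) 0) (by simp)
    simpa [pderiv2] using this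
  rw [hasDerivAt_iff_tendsto_slope] at hh
  have hh' : Filter.Tendsto
      (slope (fun t : ℝ => fderiv ℝ F (u + t • (Pi.single i 1 : Fin n → ℝ)) (Pi.single j 1)) 0)
      (𝓝[>] (0:ℝ)) (𝓝 (pderiv2 F i j u)) :=
    hh.mono_left (nhdsWithin_mono _ (fun s hs => ne_of_gt hs))
  refine ge_of_tendsto hh' ?_
  filter_upwards [self_mem_nhdsWithin] with s hs
  have hs' : (0:ℝ) < s := hs
  rw [slope_def_field]
  apply div_nonneg _ (by simpa using hs'.le)
  have hmono := fderiv_mono_of_supermod hd hsup hu hu0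
    (smul_nonneg hs'.le (single_nonneg' i)) (single_nonneg' j)
  simp only [zero_smul, add_zero]
  linarith [hmono]

lemma snd_deriv_apply {F : (Fin n → ℝ) → ℝ} {x : Fin n → ℝ}
    (hx : ContDiffAt ℝ 2 F x) (v w : Fin n → ℝ) :
    fderiv ℝ (fun y => fderiv ℝ F y w) x v = (fderiv ℝ (fderiv ℝ F) x) v w := by
  have hdf : DifferentiableAt ℝ (fderiv ℝ F) x :=
    (hx.fderiv_right (m := 1) (by norm_num)).differentiableAt (by norm_num)
  rw [fderiv_clm_apply hdf (differentiableAt_const w)]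
  simp

lemma bilinear_nonneg {F : (Fin n → ℝ) → ℝ} {x : Fin n → ℝ}
    (hx : ContDiffAt ℝ 2 F x) (hess : ∀ i j : Fin n, 0 ≤ pderiv2 F i j x)
    {v w : Fin n → ℝ} (hv : 0 ≤ v) (hw : 0 ≤ w) :
    0 ≤ fderiv ℝ (fun y => fderiv ℝ F y w) x v := by
  rw [snd_deriv_apply hx]
  have hB : ∀ i j : Fin n, 0 ≤ (fderiv ℝ (fderiv ℝ F) x) (Pi.single i 1) (Pi.single j 1) :=
    fun i j => by
      rw [← snd_deriv_apply hx]
      exact hess i j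
  have hexp : (fderiv ℝ (fderiv ℝ F) x) v w
      = ∑ i, ∑ j, v i * (w j * (fderiv ℝ (fderiv ℝ F) x) (Pi.single i 1) (Pi.single j 1)) := by
    conv_lhs => rw [single_decomp v, single_decomp w]
    simp only [map_sum, map_smul, ContinuousLinearMap.coe_sum', Finset.sum_apply,
      ContinuousLinearMap.coe_smul', Pi.smul_apply, smul_eq_mul, Finset.mul_sum]
    rw [Finset.sum_comm]
    exact Finset.sum_congr rfl fun i _ => Finset.sum_congr rfl fun j _ => by ring
  rw [hexp]
  refine Finset.sum_nonneg fun i _ => Finset.sum_nonneg fun j _ => ?_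
  exact mul_nonneg (hv i) (mul_nonneg (hw j) (hB i j))

/-- nonnegative Hessian implies directional derivatives are monotone. -/
lemma fderiv_mono_of_hess {F : (Fin n → ℝ) → ℝ}
    (hdiffF : ∀ x : Fin n → ℝ, 0 ≤ x → x ≠ 0 → ContDiffAt ℝ 2 F x)
    (hess : ∀ u : Fin n → ℝ, 0 ≤ u → u ≠ 0 → ∀ i j : Fin n, 0 ≤ pderiv2 F i j u)
    {a b v : Fin n → ℝ} (ha : 0 ≤ a) (ha0 : a ≠ 0) (hb : 0 ≤ b) (hv : 0 ≤ v) :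
    fderiv ℝ F a v ≤ fderiv ℝ F (a + b) v := by
  have hpt : ∀ s : ℝ, 0 ≤ s → (0 ≤ a + s • b ∧ a + s • b ≠ 0) := fun s hs =>
    ⟨add_nonneg ha (smul_nonneg hs hb), add_ne_zero_left ha ha0 (smul_nonneg hs hb)⟩
  have hD : ∀ s : ℝ, 0 ≤ s →
      HasDerivAt (fun t : ℝ => fderiv ℝ F (a + t • b) v)
        (fderiv ℝ (fun y => fderiv ℝ F y v) (a + s • b) b) s := by
    intro s hs
    have h2 := hdiffF _ (hpt s hs).1 (hpt s hs).2
    have hG : DifferentiableAt ℝ (fun y => fderiv ℝ F y v) (a + s • b) :=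
      ((h2.fderiv_right (m := 1) (by norm_num)).differentiableAt
        (by norm_num)).clm_apply (differentiableAt_const _)
    exact hasDerivAt_comp_line hG (line_hasDerivAt a b s) rfl
  have hmono : MonotoneOn (fun t : ℝ => fderiv ℝ F (a + t • b) v) (Set.Icc 0 1) := by
    apply monotoneOn_of_deriv_nonneg (convex_Icc 0 1)
    · intro s hs
      exact ((hD s hs.1).continuousAt).continuousWithinAt
    · intro s hs
      rw [interior_Icc] at hs
      exact ((hD s hs.1.le).differentiableAt).differentiableWithinAt
    · intro s hs
      rw [interior_Icc] at hs
      rw [(hD s hs.1.le).deriv]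
      exact bilinear_nonneg (hdiffF _ (hpt s hs.1.le).1 (hpt s hs.1.le).2)
        (hess _ (hpt s hs.1.le).1 (hpt s hs.1.le).2) hb hv
  have := hmono (Set.left_mem_Icc.mpr zero_le_one) (Set.right_mem_Icc.mpr zero_le_one)
    zero_le_one
  simpa using this

/-- nonnegative Hessian implies supermodularity. -/
lemma supermod_of_hess {F : (Fin n → ℝ) → ℝ} (hcont : Continuous F)
    (hdiffF : ∀ x : Fin n → ℝ, 0 ≤ x → x ≠ 0 → ContDiffAt ℝ 2 F x)
    (hess : ∀ u : Fin n → ℝ, 0 ≤ u → u ≠ 0 → ∀ i j : Fin n, 0 ≤ pderiv2 F i j u) :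
    ∀ u v w : Fin n → ℝ, 0 ≤ u → 0 ≤ v → 0 ≤ w →
      F (u + w) - F u ≤ F (u + v + w) - F (u + v) := by
  intro u v w hu hv hw
  have hd : ∀ x : Fin n → ℝ, 0 ≤ x → x ≠ 0 → DifferentiableAt ℝ F x :=
    fun x hx hx0 => (hdiffF x hx hx0).differentiableAt (by norm_num)
  have main : ∀ u' : Fin n → ℝ, 0 ≤ u' → u' ≠ 0 →
      F (u' + w) - F u' ≤ F (u' + v + w) - F (u' + v) := by
    intro u' hu' hu'0
    have hpt : ∀ t : ℝ, 0 ≤ t → (0 ≤ u' + t • v ∧ u' + t • v ≠ 0) := fun t ht =>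
      ⟨add_nonneg hu' (smul_nonneg ht hv), add_ne_zero_left hu' hu'0 (smul_nonneg ht hv)⟩
    have hline2 : ∀ t : ℝ, HasDerivAt (fun s : ℝ => u' + s • v + w) v t := by
      intro t
      have h := line_hasDerivAt (u' + w) v t
      have heq : (fun s : ℝ => u' + s • v + w) = (fun s : ℝ => (u' + w) + s • v) := by
        funext s; abel
      rw [heq]
      exact h
    have hD : ∀ t : ℝ, 0 ≤ t →
        HasDerivAt (fun s : ℝ => F (u' + s • v + w) - F (u' + s • v))
          (fderiv ℝ F (u' + t • v + w) v - fderiv ℝ F (u' + t • v) v) t := by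
      intro t ht
      have hx1 : 0 ≤ u' + t • v + w := add_nonneg (hpt t ht).1 hw
      have hx10 : u' + t • v + w ≠ 0 := add_ne_zero_left (hpt t ht).1 (hpt t ht).2 hw
      have h1 : HasDerivAt (fun s : ℝ => F (u' + s • v + w))
          (fderiv ℝ F (u' + t • v + w) v) t :=
        hasDerivAt_comp_line (hd _ hx1 hx10) (hline2 t) rfl
      have h2 : HasDerivAt (fun s : ℝ => F (u' + s • v))
          (fderiv ℝ F (u' + t • v) v) t :=
        hasDerivAt_comp_line (hd _ (hpt t ht).1 (hpt t ht).2) (line_hasDerivAt u' v t) rfl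
      exact h1.sub h2
    have hmono : MonotoneOn (fun s : ℝ => F (u' + s • v + w) - F (u' + s • v))
        (Set.Icc 0 1) := by
      apply monotoneOn_of_deriv_nonneg (convex_Icc 0 1)
      · intro s hs
        exact ((hD s hs.1).continuousAt).continuousWithinAt
      · intro s hs
        rw [interior_Icc] at hs
        exact ((hD s hs.1.le).differentiableAt).differentiableWithinAt
      · intro s hs
        rw [interior_Icc] at hs
        rw [(hD s hs.1.le).deriv]
        have := fderiv_mono_of_hess hdiffF hess (hpt s hs.1.le).1 (hpt s hs.1.le).2 hw hv
        linarith [this]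
    have h01 := hmono (Set.left_mem_Icc.mpr zero_le_one) (Set.right_mem_Icc.mpr zero_le_one)
      zero_le_one
    simpa using h01
  by_cases hu0 : u = 0
  · subst hu0
    by_cases hvw : v + w = 0
    · have hv0 : v = 0 := le_antisymm (le_of_le_of_eq (le_add_of_nonneg_right hw) hvw) hv
      have hw0 : w = 0 := le_antisymm (le_of_le_of_eq (le_add_of_nonneg_left hv) hvw) hw
      simp [hv0, hw0]
    · have T : ∀ z : Fin n → ℝ, Filter.Tendsto (fun ε : ℝ => F (ε • (v + w) + z))
          (𝓝[>] (0:ℝ)) (nhds (F z)) := by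
        intro z
        have hc : Continuous (fun ε : ℝ => ε • (v + w) + z) := by
          continuity
        have h0 : Filter.Tendsto (fun ε : ℝ => ε • (v + w) + z)
            (𝓝[>] (0:ℝ)) (nhds z) := by
          have := hc.tendsto (0 : ℝ)
          simp only [zero_smul, zero_add] at this
          exact this.mono_left nhdsWithin_le_nhds
        exact (hcont.continuousAt.tendsto).comp h0
      have key : ∀ᶠ ε in nhdsWithin (0:ℝ) (Set.Ioi 0),
          F (ε • (v + w) + w) - F (ε • (v + w) + 0)
            ≤ F (ε • (v + w) + (v + w)) - F (ε • (v + w) + v) := by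
        filter_upwards [self_mem_nhdsWithin] with ε hε
        have hε' : (0:ℝ) < ε := hε
        have hu'1 : 0 ≤ ε • (v + w) := smul_nonneg hε'.le (add_nonneg hv hw)
        have hu'0 : ε • (v + w) ≠ 0 := smul_ne_zero hε'.ne' hvw
        have := main (ε • (v + w)) hu'1 hu'0
        simpa [add_assoc] using this
      have hfinal := le_of_tendsto_of_tendsto ((T w).sub (T 0)) (((T (v + w)).sub (T v))) key
      simpa [zero_add] using hfinal
  · exact main u hu hu0


/-- the chain-rule formula for the Hessian entries of `N ^ p`. -/
lemma pderiv2_rpow_formula {N : (Fin n → ℝ) → ℝ} (hN : IsMonotoneNorm N) (p : ℝ)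
    (hdiff : ∀ x : Fin n → ℝ, 0 ≤ x → x ≠ 0 → ContDiffAt ℝ 2 N x)
    {u : Fin n → ℝ} (hu : 0 ≤ u) (hu0 : u ≠ 0) (i j : Fin n) :
    pderiv2 (fun x => N x ^ p) i j u
      = p * ((p - 1) * N u ^ (p - 2) * (pderiv N i u * pderiv N j u)
          + N u ^ (p - 1) * pderiv2 N i j u) := by
  have hNu : 0 < N u := mn_pos hN hu0
  have hc2 := hdiff u hu hu0
  have hND : DifferentiableAt ℝ N u := hc2.differentiableAt (by norm_num)
  have hev : ∀ᶠ y in 𝓝 u, fderiv ℝ (fun x => N x ^ p) y (Pi.single j 1)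
      = p * (N y ^ (p - 1) * fderiv ℝ N y (Pi.single j 1)) := by
    have h1 : ∀ᶠ y in 𝓝 u, ContDiffAt ℝ 2 N y := hc2.eventually (by simp)
    have h2 : ∀ᶠ y in 𝓝 u, N y ≠ 0 :=
      (mn_continuous hN).continuousAt.eventually_ne hNu.ne'
    filter_upwards [h1, h2] with y hy hy0
    have hyd : DifferentiableAt ℝ N y := hy.differentiableAt (by norm_num)
    have hF : HasFDerivAt (fun x => N x ^ p) ((p * N y ^ (p - 1)) • fderiv ℝ N y) y := by
      have := (Real.hasDerivAt_rpow_const (p := p) (Or.inl hy0)).comp_hasFDerivAt y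
        hyd.hasFDerivAt
      simpa [Function.comp_def] using this
    rw [hF.fderiv]
    simp [mul_assoc]
  have heq : pderiv2 (fun x => N x ^ p) i j u
      = fderiv ℝ (fun y => p * (N y ^ (p - 1) * fderiv ℝ N y (Pi.single j 1))) u
          (Pi.single i 1) := by
    rw [pderiv2_def]
    rw [Filter.EventuallyEq.fderiv_eq hev]
  have hrpow : HasFDerivAt (fun y => N y ^ (p - 1))
      (((p - 1) * N u ^ (p - 2)) • fderiv ℝ N u) u := by
    have h := (Real.hasDerivAt_rpow_const (p := p - 1) (Or.inl hNu.ne')).comp_hasFDerivAt u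
      hND.hasFDerivAt
    have he : p - 1 - 1 = p - 2 := by ring
    simpa [Function.comp_def, he] using h
  have hG : DifferentiableAt ℝ (fun y => fderiv ℝ N y (Pi.single j 1)) u :=
    ((hc2.fderiv_right (m := 1) (by norm_num)).differentiableAt
      (by norm_num)).clm_apply (differentiableAt_const _)
  have hmul : HasFDerivAt (fun y => p * (N y ^ (p - 1) * fderiv ℝ N y (Pi.single j 1))) _ u :=
    (hrpow.mul hG.hasFDerivAt).const_mul p
  rw [heq, hmul.fderiv]
  have e1 : fderiv ℝ (fun y => fderiv ℝ N y (Pi.single j 1)) u (Pi.single i 1)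
      = pderiv2 N i j u := rfl
  have e2 : fderiv ℝ N u (Pi.single i 1) = pderiv N i u := rfl
  have e3 : fderiv ℝ N u (Pi.single j 1) = pderiv N j u := rfl
  simp only [ContinuousLinearMap.smul_apply, ContinuousLinearMap.add_apply, smul_eq_mul,
    e1, e2, e3]
  ring

end PSupAux

/-- Hessian characterization of `p`-supermodularity for a twice differentiable monotone norm:
`N` is `p`-supermodular iff the Hessian of `N^p` is (entrywise) nonnegative on the nonnegative
orthant, iff `∂²ᵢⱼN(u) ≥ −(p−1)·∂ᵢN(u)·∂ⱼN(u)/N(u)` there. -/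


theorem pSupermodular_iff_hessian {n : ℕ} (hn : 1 ≤ n) (p : ℝ) (hp : 1 ≤ p)
    (N : (Fin n → ℝ) → ℝ) (hN : IsMonotoneNorm N)
    (hdiff : ∀ x : Fin n → ℝ, 0 ≤ x → x ≠ 0 → ContDiffAt ℝ 2 N x) :
    (IsPSupermodular N p ↔
      ∀ u : Fin n → ℝ, 0 ≤ u → u ≠ 0 → ∀ i j : Fin n,
        0 ≤ pderiv2 (fun x => N x ^ p) i j u) ∧
    ((∀ u : Fin n → ℝ, 0 ≤ u → u ≠ 0 → ∀ i j : Fin n,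
        0 ≤ pderiv2 (fun x => N x ^ p) i j u) ↔
      ∀ u : Fin n → ℝ, 0 ≤ u → u ≠ 0 → ∀ i j : Fin n,
        -((p - 1) * pderiv N i u * pderiv N j u / N u) ≤ pderiv2 N i j u) := by
  have hp0 : (0:ℝ) < p := lt_of_lt_of_le one_pos hp
  have hFc2 : ∀ x : Fin n → ℝ, 0 ≤ x → x ≠ 0 → ContDiffAt ℝ 2 (fun x => N x ^ p) x := by
    intro x hx hx0
    exact (Real.contDiffAt_rpow_const_of_ne (PSupAux.mn_pos hN hx0).ne').comp x
      (hdiff x hx hx0)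
  have hFcont : Continuous (fun x => N x ^ p) := by
    rw [continuous_iff_continuousAt]
    intro y
    exact (Real.continuousAt_rpow_const (N y) p (Or.inr hp0.le)).comp
      (PSupAux.mn_continuous hN).continuousAt
  constructor
  · constructor
    · intro hsup u hu hu0 i j
      exact PSupAux.hess_nonneg_of_supermod hFc2
        (fun u v w hu hv hw => hsup u v w hu hv hw) hu hu0 i j
    · intro hess u v w hu hv hw
      exact PSupAux.supermod_of_hess hFcont hFc2 hess u v w hu hv hw
  · have key : ∀ u : Fin n → ℝ, 0 ≤ u → u ≠ 0 → ∀ i j : Fin n,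
        (0 ≤ pderiv2 (fun x => N x ^ p) i j u ↔
          -((p - 1) * pderiv N i u * pderiv N j u / N u) ≤ pderiv2 N i j u) := by
      intro u hu hu0 i j
      have hNu : 0 < N u := PSupAux.mn_pos hN hu0
      rw [PSupAux.pderiv2_rpow_formula hN p hdiff hu hu0 i j]
      have rel : N u ^ (p - 2) * N u = N u ^ (p - 1) := by
        nth_rewrite 2 [← Real.rpow_one (N u)]
        rw [← Real.rpow_add hNu]
        ring_nf
      have hpc2 : 0 < p * N u ^ (p - 2) := mul_pos hp0 (Real.rpow_pos_of_pos hNu _)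
      have E : p * ((p - 1) * N u ^ (p - 2) * (pderiv N i u * pderiv N j u)
            + N u ^ (p - 1) * pderiv2 N i j u)
          = (p * N u ^ (p - 2)) * (pderiv2 N i j u * N u
            + (p - 1) * (pderiv N i u * pderiv N j u)) := by
        rw [← rel]; ring
      rw [E, mul_nonneg_iff_of_pos_left hpc2]
      rw [← neg_div, div_le_iff₀ hNu]
      constructor <;> intro h <;> nlinarith [h]
    constructor
    · intro H u hu hu0 i j
      exact (key u hu hu0 i j).mp (H u hu hu0 i j)
    · intro H u hu hu0 i j
      exact (key u hu hu0 i j).mpr (H u hu hu0 i j)
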